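/- Let F = F_q be a finite field with q elements, A ∈ F^{m×m}, B ∈ F^{n×n}, and S ∈ F^{m×n}, and suppose that the F-linear span of {A^i S B^j : i, j ≥ 0} equals F^{m×n}. Then for any integers 0 ≤ h ≤ m and 0 ≤ k ≤ n, the set M^{h,k}_{A,B;S} = { p(A) S r(B) : p, r ∈ F[s], deg p < h, deg r < k } has cardinality (q^h − 1)(q^k − 1)/(q − 1) + 1. -/

import Mathlib

open Matrix Polynomial

section Aux

variable {F : Type*} [Field F]

lemma rank1_aux {ι κ : Type*} {c c' : ι → F} {d d' : κ → F}
    (hcd : ∀ i j, c i * d j = c' i * d' j)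
    {i0 : ι} (hc0 : c i0 ≠ 0) {j0 : κ} (hd0 : d j0 ≠ 0) :
    ∃ u : F, u ≠ 0 ∧ (∀ i, c' i = u * c i) ∧ (∀ j, d' j = u⁻¹ * d j) := by
  have h0 : c' i0 * d' j0 ≠ 0 := by rw [← hcd]; exact mul_ne_zero hc0 hd0
  have hc' : c' i0 ≠ 0 := left_ne_zero_of_mul h0
  have hd' : d' j0 ≠ 0 := right_ne_zero_of_mul h0
  refine ⟨c' i0 / c i0, div_ne_zero hc' hc0, ?_, ?_⟩
  · intro i
    have key : d' j0 * (c' i * c i0) = d' j0 * (c' i0 * c i) := by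
      linear_combination (c i) * (hcd i0 j0) - (c i0) * (hcd i j0)
    have h2 := mul_left_cancel₀ hd' key
    field_simp
    linear_combination h2
  · intro j
    have key := hcd i0 j
    field_simp
    linear_combination - key

lemma natDegree_lt_aux {p : Polynomial F} {N : ℕ} (hN : 0 < N)
    (hp : p.degree < (N : ℕ)) : p.natDegree < N := by
  rcases eq_or_ne p 0 with rfl | hp0
  · simpa using hN
  · exact (Polynomial.natDegree_lt_iff_degree_lt hp0).mpr hp

lemma sandwich_expand {m n : ℕ}
    (A : Matrix (Fin m) (Fin m) F) (B : Matrix (Fin n) (Fin n) F)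
    (S : Matrix (Fin m) (Fin n) F) (c d : ℕ → F) (a b : ℕ) :
    (∑ i ∈ Finset.range a, c i • A ^ i) * S * (∑ j ∈ Finset.range b, d j • B ^ j)
      = ∑ i ∈ Finset.range a, ∑ j ∈ Finset.range b, (c i * d j) • (A ^ i * S * B ^ j) := by
  rw [Matrix.sum_mul, Matrix.sum_mul]
  refine Finset.sum_congr rfl fun i _ => ?_
  rw [Matrix.mul_sum]
  refine Finset.sum_congr rfl fun j _ => ?_
  rw [Matrix.smul_mul, Matrix.smul_mul, Matrix.mul_smul, smul_smul]

lemma indep_aux {m n : ℕ}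
    (A : Matrix (Fin m) (Fin m) F) (B : Matrix (Fin n) (Fin n) F)
    (S : Matrix (Fin m) (Fin n) F)
    (hspan : Submodule.span F
      {M : Matrix (Fin m) (Fin n) F | ∃ i j : ℕ, M = A ^ i * S * B ^ j} = ⊤)
    (hm : 0 < m) (hn : 0 < n) :
    LinearIndependent F (fun ij : Fin m × Fin n => A ^ (ij.1 : ℕ) * S * B ^ (ij.2 : ℕ)) := by
  apply linearIndependent_of_top_le_span_of_card_eq_finrank
  · rw [← hspan]
    apply Submodule.span_le.mpr
    rintro M ⟨i, j, rfl⟩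
    have hA : A ^ i = ∑ i' ∈ Finset.range m, ((X ^ i %ₘ A.charpoly).coeff i') • A ^ i' := by
      have h1 : aeval A (X ^ i %ₘ A.charpoly) = A ^ i := by
        rw [aeval_modByMonic_eq_self_of_root A.aeval_self_charpoly]
        simp
      rw [← h1, aeval_eq_sum_range' (n := m) ?_]
      apply natDegree_lt_aux hm
      have := Polynomial.degree_modByMonic_lt (X ^ i) A.charpoly_monic
      rwa [A.charpoly_degree_eq_dim, Fintype.card_fin] at this
    have hB : B ^ j = ∑ j' ∈ Finset.range n, ((X ^ j %ₘ B.charpoly).coeff j') • B ^ j' := by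
      have h1 : aeval B (X ^ j %ₘ B.charpoly) = B ^ j := by
        rw [aeval_modByMonic_eq_self_of_root B.aeval_self_charpoly]
        simp
      rw [← h1, aeval_eq_sum_range' (n := n) ?_]
      apply natDegree_lt_aux hn
      have := Polynomial.degree_modByMonic_lt (X ^ j) B.charpoly_monic
      rwa [B.charpoly_degree_eq_dim, Fintype.card_fin] at this
    rw [hA, hB, sandwich_expand]
    apply Submodule.sum_mem
    intro i' hi'
    apply Submodule.sum_mem
    intro j' hj'
    exact Submodule.smul_mem _ _ (Submodule.subset_span
      ⟨(⟨i', Finset.mem_range.mp hi'⟩, ⟨j', Finset.mem_range.mp hj'⟩), rfl⟩)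
  · simp [Module.finrank_matrix]

/-- The sandwich map on coefficient vectors. -/
def psi {m n h k : ℕ} (A : Matrix (Fin m) (Fin m) F) (B : Matrix (Fin n) (Fin n) F)
    (S : Matrix (Fin m) (Fin n) F) (x : (Fin h → F) × (Fin k → F)) :
    Matrix (Fin m) (Fin n) F :=
  (∑ i : Fin h, x.1 i • A ^ (i : ℕ)) * S * (∑ j : Fin k, x.2 j • B ^ (j : ℕ))

/-- Extension of a coefficient vector by zero. -/
def ext0 {N : ℕ} (c : Fin N → F) : ℕ → F := fun i => if hi : i < N then c ⟨i, hi⟩ else 0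

lemma ext0_coe {N : ℕ} (c : Fin N → F) (i : Fin N) : ext0 c (i : ℕ) = c i := by
  simp [ext0, i.isLt]

lemma ext0_sum_smul {N : ℕ} {M : Type*} [AddCommMonoid M] [Module F M]
    (c : Fin N → F) (f : ℕ → M) :
    ∑ i ∈ Finset.range N, ext0 c i • f i = ∑ i : Fin N, c i • f (i : ℕ) := by
  rw [← Fin.sum_univ_eq_sum_range (fun i => ext0 c i • f i) N]
  exact Finset.sum_congr rfl fun i _ => by rw [ext0_coe]

lemma psi_eq_sum {m n h k : ℕ} (A : Matrix (Fin m) (Fin m) F) (B : Matrix (Fin n) (Fin n) F)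
    (S : Matrix (Fin m) (Fin n) F) (hh : h ≤ m) (hk : k ≤ n)
    (x : (Fin h → F) × (Fin k → F)) :
    psi A B S x = ∑ ij : Fin m × Fin n,
      (ext0 x.1 (ij.1 : ℕ) * ext0 x.2 (ij.2 : ℕ)) • (A ^ (ij.1 : ℕ) * S * B ^ (ij.2 : ℕ)) := by
  have e1 : ∑ i ∈ Finset.range h, ext0 x.1 i • A ^ i
      = ∑ i ∈ Finset.range m, ext0 x.1 i • A ^ i := by
    apply Finset.sum_subset (Finset.range_subset_range.mpr hh)
    intro i _ hi
    rw [show ext0 x.1 i = 0 from dif_neg (by simpa using hi), zero_smul]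
  have e2 : ∑ j ∈ Finset.range k, ext0 x.2 j • B ^ j
      = ∑ j ∈ Finset.range n, ext0 x.2 j • B ^ j := by
    apply Finset.sum_subset (Finset.range_subset_range.mpr hk)
    intro j _ hj
    rw [show ext0 x.2 j = 0 from dif_neg (by simpa using hj), zero_smul]
  have e3 : ∀ f : ℕ → ℕ → Matrix (Fin m) (Fin n) F,
      ∑ i ∈ Finset.range m, ∑ j ∈ Finset.range n, f i j = ∑ ij : Fin m × Fin n, f ij.1 ij.2 := by
    intro f
    rw [Fintype.sum_prod_type, Fin.sum_univ_eq_sum_range (fun i => ∑ j : Fin n, f i j) m]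
    exact Finset.sum_congr rfl fun i _ => (Fin.sum_univ_eq_sum_range (fun j => f i j) n).symm
  calc psi A B S x
      = (∑ i ∈ Finset.range h, ext0 x.1 i • A ^ i) * S
          * (∑ j ∈ Finset.range k, ext0 x.2 j • B ^ j) := by
        rw [ext0_sum_smul, ext0_sum_smul]; rfl
    _ = (∑ i ∈ Finset.range m, ext0 x.1 i • A ^ i) * S
          * (∑ j ∈ Finset.range n, ext0 x.2 j • B ^ j) := by rw [e1, e2]
    _ = ∑ i ∈ Finset.range m, ∑ j ∈ Finset.range n,
          (ext0 x.1 i * ext0 x.2 j) • (A ^ i * S * B ^ j) := sandwich_expand A B S _ _ m n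
    _ = _ := e3 _

lemma psi_key {m n h k : ℕ} (A : Matrix (Fin m) (Fin m) F) (B : Matrix (Fin n) (Fin n) F)
    (S : Matrix (Fin m) (Fin n) F)
    (hspan : Submodule.span F
      {M : Matrix (Fin m) (Fin n) F | ∃ i j : ℕ, M = A ^ i * S * B ^ j} = ⊤)
    (hm : 0 < m) (hn : 0 < n) (hh : h ≤ m) (hk : k ≤ n)
    {x y : (Fin h → F) × (Fin k → F)} (hxy : psi A B S x = psi A B S y) :
    ∀ (i : Fin h) (j : Fin k), x.1 i * x.2 j = y.1 i * y.2 j := by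
  intro i j
  have hindep := indep_aux A B S hspan hm hn
  have h0 : ∑ ij : Fin m × Fin n,
      ((ext0 x.1 (ij.1 : ℕ) * ext0 x.2 (ij.2 : ℕ))
        - (ext0 y.1 (ij.1 : ℕ) * ext0 y.2 (ij.2 : ℕ)))
        • (A ^ (ij.1 : ℕ) * S * B ^ (ij.2 : ℕ)) = 0 := by
    simp only [sub_smul, Finset.sum_sub_distrib]
    rw [← psi_eq_sum A B S hh hk x, ← psi_eq_sum A B S hh hk y, hxy, sub_self]
  have hco := Fintype.linearIndependent_iff.mp hindep _ h0
    (⟨(i : ℕ), lt_of_lt_of_le i.isLt hh⟩, ⟨(j : ℕ), lt_of_lt_of_le j.isLt hk⟩)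
  have hco' := sub_eq_zero.mp hco
  simpa [ext0, i.isLt, j.isLt] using hco'

lemma psi_zero_left {m n h k : ℕ} (A : Matrix (Fin m) (Fin m) F)
    (B : Matrix (Fin n) (Fin n) F) (S : Matrix (Fin m) (Fin n) F) (d : Fin k → F) :
    psi A B S ((0 : Fin h → F), d) = 0 := by
  simp [psi]

lemma psi_zero_right {m n h k : ℕ} (A : Matrix (Fin m) (Fin m) F)
    (B : Matrix (Fin n) (Fin n) F) (S : Matrix (Fin m) (Fin n) F) (c : Fin h → F) :
    psi A B S (c, (0 : Fin k → F)) = 0 := by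
  simp [psi]

lemma psi_zero_iff {m n h k : ℕ} (A : Matrix (Fin m) (Fin m) F)
    (B : Matrix (Fin n) (Fin n) F) (S : Matrix (Fin m) (Fin n) F)
    (hspan : Submodule.span F
      {M : Matrix (Fin m) (Fin n) F | ∃ i j : ℕ, M = A ^ i * S * B ^ j} = ⊤)
    (hm : 0 < m) (hn : 0 < n) (hh : h ≤ m) (hk : k ≤ n)
    (x : (Fin h → F) × (Fin k → F)) :
    psi A B S x = 0 ↔ x.1 = 0 ∨ x.2 = 0 := by
  constructor
  · intro hx
    by_contra hcon
    push_neg at hcon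
    obtain ⟨hc, hd⟩ := hcon
    obtain ⟨i, hi⟩ := Function.ne_iff.mp hc
    obtain ⟨j, hj⟩ := Function.ne_iff.mp hd
    simp only [Pi.zero_apply] at hi hj
    have := psi_key A B S hspan hm hn hh hk
      (x := x) (y := ((0 : Fin h → F), (0 : Fin k → F)))
      (by rw [hx, psi_zero_left]) i j
    simp only [Pi.zero_apply, mul_zero] at this
    exact (mul_ne_zero hi hj) this
  · obtain ⟨c, d⟩ := x
    rintro (hc | hd)
    · simp only at hc; rw [hc]; exact psi_zero_left A B S d
    · simp only at hd; rw [hd]; exact psi_zero_right A B S c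

lemma psi_smul {m n h k : ℕ} (A : Matrix (Fin m) (Fin m) F) (B : Matrix (Fin n) (Fin n) F)
    (S : Matrix (Fin m) (Fin n) F) (c : Fin h → F) (d : Fin k → F) {u : F} (hu : u ≠ 0) :
    psi A B S (u • c, u⁻¹ • d) = psi A B S (c, d) := by
  have e1 : ∑ i : Fin h, (u • c) i • A ^ (i : ℕ) = u • ∑ i : Fin h, c i • A ^ (i : ℕ) := by
    rw [Finset.smul_sum]
    exact Finset.sum_congr rfl fun i _ => by simp [smul_smul]
  have e2 : ∑ j : Fin k, (u⁻¹ • d) j • B ^ (j : ℕ) = u⁻¹ • ∑ j : Fin k, d j • B ^ (j : ℕ) := by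
    rw [Finset.smul_sum]
    exact Finset.sum_congr rfl fun j _ => by simp [smul_smul]
  show (∑ i : Fin h, (u • c) i • A ^ (i : ℕ)) * S * (∑ j : Fin k, (u⁻¹ • d) j • B ^ (j : ℕ)) = _
  rw [e1, e2, Matrix.smul_mul, Matrix.smul_mul, Matrix.mul_smul, smul_smul,
    mul_inv_cancel₀ hu, one_smul]
  rfl

end Aux

/-- If {A^i S B^j} spans the whole matrix space over the finite field F with q
elements, then for 0 ≤ h ≤ m and 0 ≤ k ≤ n the set P^h[A] S P^k[B] has
cardinality (q^h − 1)(q^k − 1)/(q − 1) + 1. -/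
theorem card_poly_sandwich
    {F : Type*} [Field F] [Fintype F] {m n : ℕ}
    (A : Matrix (Fin m) (Fin m) F) (B : Matrix (Fin n) (Fin n) F)
    (S : Matrix (Fin m) (Fin n) F)
    (hspan : Submodule.span F
      {M : Matrix (Fin m) (Fin n) F | ∃ i j : ℕ, M = A ^ i * S * B ^ j} = ⊤)
    (h k : ℕ) (hh : h ≤ m) (hk : k ≤ n) :
    Nat.card {M : Matrix (Fin m) (Fin n) F | ∃ p r : Polynomial F,
        p.degree < (h : ℕ) ∧ r.degree < (k : ℕ) ∧
        M = (Polynomial.aeval A p) * S * (Polynomial.aeval B r)} =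
      (Fintype.card F ^ h - 1) * (Fintype.card F ^ k - 1) / (Fintype.card F - 1) + 1 := by
  classical
  by_cases hhk : h = 0 ∨ k = 0
  · -- degenerate case: the set is {0}
    have hTs : {M : Matrix (Fin m) (Fin n) F | ∃ p r : Polynomial F,
        p.degree < (h : ℕ) ∧ r.degree < (k : ℕ) ∧
        M = (Polynomial.aeval A p) * S * (Polynomial.aeval B r)} = {0} := by
      ext M
      simp only [Set.mem_setOf_eq, Set.mem_singleton_iff]
      constructor
      · rintro ⟨p, r, hp, hr, rfl⟩
        rcases hhk with h0 | k0
        · subst h0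
          rw [Nat.cast_zero, Nat.WithBot.lt_zero_iff, Polynomial.degree_eq_bot] at hp
          simp [hp]
        · subst k0
          rw [Nat.cast_zero, Nat.WithBot.lt_zero_iff, Polynomial.degree_eq_bot] at hr
          simp [hr]
      · rintro rfl
        exact ⟨0, 0, by rw [Polynomial.degree_zero, Nat.cast_withBot]; exact WithBot.bot_lt_coe h,
          by rw [Polynomial.degree_zero, Nat.cast_withBot]; exact WithBot.bot_lt_coe k, by simp⟩
    rw [hTs, Nat.card_coe_set_eq, Set.ncard_singleton]
    have h1 : (Fintype.card F ^ h - 1) * (Fintype.card F ^ k - 1) = 0 := by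
      rcases hhk with rfl | rfl <;> simp
    rw [h1]
    simp
  · push_neg at hhk
    obtain ⟨hh0, hk0⟩ := hhk
    have hh1 : 0 < h := Nat.pos_of_ne_zero hh0
    have hk1 : 0 < k := Nat.pos_of_ne_zero hk0
    have hm : 0 < m := lt_of_lt_of_le hh1 hh
    have hn : 0 < n := lt_of_lt_of_le hk1 hk
    set q := Fintype.card F with hqdef
    -- the set is the range of psi
    have hT : {M : Matrix (Fin m) (Fin n) F | ∃ p r : Polynomial F,
        p.degree < (h : ℕ) ∧ r.degree < (k : ℕ) ∧
        M = (Polynomial.aeval A p) * S * (Polynomial.aeval B r)}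
        = Set.range (psi A B S : (Fin h → F) × (Fin k → F) → _) := by
      ext M
      simp only [Set.mem_setOf_eq, Set.mem_range]
      constructor
      · rintro ⟨p, r, hp, hr, rfl⟩
        refine ⟨((fun i => p.coeff (i : ℕ)), (fun j => r.coeff (j : ℕ))), ?_⟩
        show (∑ i : Fin h, p.coeff (i : ℕ) • A ^ (i : ℕ)) * S
          * (∑ j : Fin k, r.coeff (j : ℕ) • B ^ (j : ℕ)) = _
        rw [Fin.sum_univ_eq_sum_range (fun i => p.coeff i • A ^ i) h,
          Fin.sum_univ_eq_sum_range (fun j => r.coeff j • B ^ j) k,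
          ← aeval_eq_sum_range' (natDegree_lt_aux hh1 hp),
          ← aeval_eq_sum_range' (natDegree_lt_aux hk1 hr)]
      · rintro ⟨⟨c, d⟩, rfl⟩
        refine ⟨∑ i : Fin h, C (c i) * X ^ (i : ℕ), ∑ j : Fin k, C (d j) * X ^ (j : ℕ),
          ?_, ?_, ?_⟩
        · refine lt_of_le_of_lt (Polynomial.degree_sum_le _ _) ?_
          refine (Finset.sup_lt_iff (by rw [Nat.cast_withBot]; exact WithBot.bot_lt_coe h)).mpr ?_
          intro i _
          exact lt_of_le_of_lt (Polynomial.degree_C_mul_X_pow_le _ _)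
            (by exact_mod_cast i.isLt)
        · refine lt_of_le_of_lt (Polynomial.degree_sum_le _ _) ?_
          refine (Finset.sup_lt_iff (by rw [Nat.cast_withBot]; exact WithBot.bot_lt_coe k)).mpr ?_
          intro j _
          exact lt_of_le_of_lt (Polynomial.degree_C_mul_X_pow_le _ _)
            (by exact_mod_cast j.isLt)
        · have eA : aeval A (∑ i : Fin h, C (c i) * X ^ (i : ℕ))
              = ∑ i : Fin h, c i • A ^ (i : ℕ) := by
            rw [map_sum]
            exact Finset.sum_congr rfl fun i _ => by
              simp [Algebra.smul_def]
          have eB : aeval B (∑ j : Fin k, C (d j) * X ^ (j : ℕ))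
              = ∑ j : Fin k, d j • B ^ (j : ℕ) := by
            rw [map_sum]
            exact Finset.sum_congr rfl fun j _ => by
              simp [Algebra.smul_def]
          rw [eA, eB]
          rfl
    -- counting
    set ψ : (Fin h → F) × (Fin k → F) → Matrix (Fin m) (Fin n) F := psi A B S with hψdef
    set t : Finset (Matrix (Fin m) (Fin n) F) := Finset.univ.image ψ with htdef
    have hrange : Set.range ψ = ↑t := by
      rw [htdef, Finset.coe_image, Finset.coe_univ, Set.image_univ]
    rw [hT, hrange, Nat.card_coe_set_eq, Set.ncard_coe_finset]
    have h0mem : (0 : Matrix (Fin m) (Fin n) F) ∈ t := by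
      refine Finset.mem_image.mpr ⟨(0, 0), Finset.mem_univ _, ?_⟩
      exact psi_zero_left A B S 0
    have htotal : (Finset.univ : Finset ((Fin h → F) × (Fin k → F))).card
        = ∑ b ∈ t, (Finset.univ.filter (fun x => ψ x = b)).card :=
      Finset.card_eq_sum_card_fiberwise fun x _ => Finset.mem_image_of_mem ψ (Finset.mem_univ x)
    have hunivcard : (Finset.univ : Finset ((Fin h → F) × (Fin k → F))).card
        = q ^ h * q ^ k := by
      simp [Fintype.card_fun, hqdef]
    have hsplit : ∑ b ∈ t, (Finset.univ.filter (fun x => ψ x = b)).card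
        = (Finset.univ.filter (fun x => ψ x = 0)).card
          + ∑ b ∈ t.erase 0, (Finset.univ.filter (fun x => ψ x = b)).card :=
      (Finset.add_sum_erase t _ h0mem).symm
    -- the fiber over 0
    have hfil0 : (Finset.univ.filter (fun x : (Fin h → F) × (Fin k → F) => ψ x = 0))
        = (Finset.univ.filter fun x => x.1 = 0) ∪ (Finset.univ.filter fun x => x.2 = 0) := by
      rw [← Finset.filter_or]
      exact Finset.filter_congr fun x _ => psi_zero_iff A B S hspan hm hn hh hk x
    have c1 : (Finset.univ.filter fun x : (Fin h → F) × (Fin k → F) => x.1 = 0).card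
        = q ^ k := by
      have he : (Finset.univ.filter fun x : (Fin h → F) × (Fin k → F) => x.1 = 0)
          = {(0 : Fin h → F)} ×ˢ Finset.univ := by
        ext x
        rw [Finset.mem_filter, Finset.mem_product]
        simp
      rw [he, Finset.card_product, Finset.card_singleton, one_mul]
      simp [Fintype.card_fun, hqdef]
    have c2 : (Finset.univ.filter fun x : (Fin h → F) × (Fin k → F) => x.2 = 0).card
        = q ^ h := by
      have he : (Finset.univ.filter fun x : (Fin h → F) × (Fin k → F) => x.2 = 0)
          = Finset.univ ×ˢ {(0 : Fin k → F)} := by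
        ext x
        rw [Finset.mem_filter, Finset.mem_product]
        simp
      rw [he, Finset.card_product, Finset.card_singleton, mul_one]
      simp [Fintype.card_fun, hqdef]
    have c12 : ((Finset.univ.filter fun x : (Fin h → F) × (Fin k → F) => x.1 = 0)
        ∩ (Finset.univ.filter fun x => x.2 = 0)).card = 1 := by
      have he : ((Finset.univ.filter fun x : (Fin h → F) × (Fin k → F) => x.1 = 0)
          ∩ (Finset.univ.filter fun x => x.2 = 0))
          = {((0, 0) : (Fin h → F) × (Fin k → F))} := by
        ext x
        simp [Prod.ext_iff]
      rw [he, Finset.card_singleton]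
    have hf0card : (Finset.univ.filter
        (fun x : (Fin h → F) × (Fin k → F) => ψ x = 0)).card + 1 = q ^ h + q ^ k := by
      rw [hfil0]
      have hu := Finset.card_union_add_card_inter
        (Finset.univ.filter fun x : (Fin h → F) × (Fin k → F) => x.1 = 0)
        (Finset.univ.filter fun x => x.2 = 0)
      rw [c1, c2, c12] at hu
      omega
    -- the nonzero fibers
    have hfibne : ∀ b ∈ t.erase 0,
        (Finset.univ.filter (fun x => ψ x = b)).card = q - 1 := by
      intro b hb
      obtain ⟨hbne, hbt⟩ := Finset.mem_erase.mp hb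
      obtain ⟨x0, _, hx0⟩ := Finset.mem_image.mp hbt
      obtain ⟨c0, d0⟩ := x0
      have hne : ¬(c0 = 0 ∨ d0 = 0) := by
        intro hc
        exact hbne (hx0 ▸ (psi_zero_iff A B S hspan hm hn hh hk (c0, d0)).mpr hc)
      push_neg at hne
      obtain ⟨hc0, hd0⟩ := hne
      obtain ⟨i0, hi0⟩ := Function.ne_iff.mp hc0
      obtain ⟨j0, hj0⟩ := Function.ne_iff.mp hd0
      simp only [Pi.zero_apply] at hi0 hj0
      have hcard1 : (Finset.univ.filter fun u : F => u ≠ 0).card = q - 1 := by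
        rw [Finset.filter_ne' Finset.univ 0, Finset.card_erase_of_mem (Finset.mem_univ 0),
          Finset.card_univ]
      rw [← hcard1]
      refine (Finset.card_bij
        (fun u _ => ((u • c0 : Fin h → F), (u⁻¹ • d0 : Fin k → F))) ?_ ?_ ?_).symm
      · intro u hu
        have hu0 : u ≠ 0 := (Finset.mem_filter.mp hu).2
        refine Finset.mem_filter.mpr ⟨Finset.mem_univ _, ?_⟩
        show ψ (u • c0, u⁻¹ • d0) = b
        rw [hψdef, psi_smul A B S c0 d0 hu0]
        exact hx0
      · intro u hu u' hu' heq
        have hu0 : u ≠ 0 := (Finset.mem_filter.mp hu).2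
        have h1 : u • c0 = u' • c0 := congrArg Prod.fst heq
        have h2 : u * c0 i0 = u' * c0 i0 := by
          have := congrFun h1 i0
          simpa using this
        exact mul_right_cancel₀ hi0 h2
      · intro x hx
        have hψx : ψ x = ψ (c0, d0) := by
          rw [(Finset.mem_filter.mp hx).2, ← hx0]
        have hcd : ∀ (i : Fin h) (j : Fin k), c0 i * d0 j = x.1 i * x.2 j :=
          psi_key A B S hspan hm hn hh hk hψx.symm
        obtain ⟨u, hu, hcc, hdd⟩ := rank1_aux hcd hi0 hj0
        refine ⟨u, Finset.mem_filter.mpr ⟨Finset.mem_univ _, hu⟩, ?_⟩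
        apply Prod.ext
        · funext i
          simpa using (hcc i).symm
        · funext j
          simpa using (hdd j).symm
    -- putting it together
    have hsum_erase : ∑ b ∈ t.erase 0, (Finset.univ.filter (fun x => ψ x = b)).card
        = (t.card - 1) * (q - 1) := by
      rw [Finset.sum_congr rfl hfibne, Finset.sum_const, smul_eq_mul,
        Finset.card_erase_of_mem h0mem]
    have main : q ^ h * q ^ k
        = (Finset.univ.filter (fun x : (Fin h → F) × (Fin k → F) => ψ x = 0)).card
          + (t.card - 1) * (q - 1) := by
      rw [← hunivcard, htotal, hsplit, hsum_erase]
    have hq2 : 2 ≤ q := Fintype.one_lt_card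
    have htpos : 1 ≤ t.card := Finset.card_pos.mpr ⟨0, h0mem⟩
    obtain ⟨a', ha'⟩ : ∃ a', q ^ h = a' + 1 :=
      ⟨q ^ h - 1, by have := Nat.one_le_pow h q (by omega); omega⟩
    obtain ⟨b', hb'⟩ : ∃ b', q ^ k = b' + 1 :=
      ⟨q ^ k - 1, by have := Nat.one_le_pow k q (by omega); omega⟩
    have hfinal : t.card = a' * b' / (q - 1) + 1 := by
      have hx : (a' + 1) * (b' + 1) = a' * b' + a' + b' + 1 := by ring
      rw [ha', hb'] at main hf0card
      have hPQ : (t.card - 1) * (q - 1) = a' * b' := by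
        set P := (t.card - 1) * (q - 1) with hP
        set Q := a' * b' with hQ
        rw [hx] at main
        omega
      have hdiv : a' * b' / (q - 1) = t.card - 1 := by
        rw [← hPQ, Nat.mul_div_cancel _ (by omega : 0 < q - 1)]
      omega
    rw [ha', hb', Nat.add_sub_cancel, Nat.add_sub_cancel]
    exact hfinal
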